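/- Let ε > 0, k ∈ ℕ, and p a probability distribution on [k]. Let α_R = (e^{ε/2}−1)/(e^{ε/2}+1), β_R = 1/(e^{ε/2}+1), λ = α_R/k + β_R, and u the uniform distribution on [k]. Let b_1,…,b_n ∈ {0,1}^k be the outputs of k-RAPPOR applied to n i.i.d. samples from p, N_x = Σ_{i=1}^n 1{b_{i,x} = 1}, and T = Σ_{x∈[k]} [(N_x − (n−1)λ)² − N_x] + k(n−1)λ². Then Var(T) ≤ 4 k n² + 8 n³ α_R² ‖p − u‖₂², which equals 4 k n² + 8 n·E[T]. -/

import Mathlib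

open Finset

noncomputable def alphaR (ε : ℝ) : ℝ := (Real.exp (ε / 2) - 1) / (Real.exp (ε / 2) + 1)

noncomputable def betaR (ε : ℝ) : ℝ := 1 / (Real.exp (ε / 2) + 1)

/-- Probability that a single output of `k`-RAPPOR with privacy parameter `ε`,
applied to a sample drawn from `p`, equals the bit-vector `b`. -/
noncomputable def rapporOne (ε : ℝ) {k : ℕ} (p : Fin k → ℝ) (b : Fin k → Bool) : ℝ :=
  ∑ x : Fin k, p x *
    ∏ j : Fin k,
      (if b j
        then (if j = x then Real.exp (ε / 2) / (Real.exp (ε / 2) + 1)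
              else 1 / (Real.exp (ε / 2) + 1))
        else (if j = x then 1 / (Real.exp (ε / 2) + 1)
              else Real.exp (ε / 2) / (Real.exp (ε / 2) + 1)))

/-- Probability of a tuple of `n` i.i.d. RAPPOR outputs `B = (b_1, …, b_n)`. -/
noncomputable def rapporN (ε : ℝ) {k n : ℕ} (p : Fin k → ℝ) (B : Fin n → Fin k → Bool) : ℝ :=
  ∏ i : Fin n, rapporOne ε p (B i)

/-- `N_x = Σ_i 1{b_{i,x} = 1}`. -/
noncomputable def Ncount {k n : ℕ} (B : Fin n → Fin k → Bool) (x : Fin k) : ℝ :=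
  ∑ i : Fin n, (if B i x then (1 : ℝ) else 0)

/-- The statistic `T = Σ_x [(N_x − (n−1)λ)² − N_x] + k(n−1)λ²`,
where `λ = α_R/k + β_R`. -/
noncomputable def Tstat (ε : ℝ) {k n : ℕ} (B : Fin n → Fin k → Bool) : ℝ :=
  (∑ x : Fin k,
      ((Ncount B x - ((n : ℝ) - 1) * (alphaR ε / k + betaR ε)) ^ 2 - Ncount B x))
    + (k : ℝ) * ((n : ℝ) - 1) * (alphaR ε / k + betaR ε) ^ 2

namespace RV
variable {k n : ℕ}

noncomputable def ker (ε : ℝ) {k : ℕ} (t j : Fin k) (v : Bool) : ℝ :=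
  if v then (if j = t then Real.exp (ε / 2) / (Real.exp (ε / 2) + 1)
              else 1 / (Real.exp (ε / 2) + 1))
  else (if j = t then 1 / (Real.exp (ε / 2) + 1)
              else Real.exp (ε / 2) / (Real.exp (ε / 2) + 1))

lemma rapporOne_eq (ε : ℝ) (p : Fin k → ℝ) (b : Fin k → Bool) :
    rapporOne ε p b = ∑ t : Fin k, p t * ∏ j : Fin k, ker ε t j (b j) := rfl

lemma ker_sum (ε : ℝ) (t j : Fin k) : ker ε t j true + ker ε t j false = 1 := by
  have h : Real.exp (ε / 2) + 1 ≠ 0 := by positivity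
  simp only [ker, if_true, Bool.false_eq_true, if_false]
  split_ifs <;> field_simp <;> ring

lemma ker_true (ε : ℝ) (t j : Fin k) :
    ker ε t j true = betaR ε + (if j = t then alphaR ε else 0) := by
  have h : Real.exp (ε / 2) + 1 ≠ 0 := by positivity
  simp only [ker, if_true, betaR, alphaR]
  split_ifs <;> field_simp <;> ring

noncomputable def E1 (ε : ℝ) (p : Fin k → ℝ) (g : (Fin k → Bool) → ℝ) : ℝ :=
  ∑ b : Fin k → Bool, rapporOne ε p b * g b

def Zf (b : Fin k → Bool) (x : Fin k) : ℝ := if b x then 1 else 0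
noncomputable def qf (ε : ℝ) (p : Fin k → ℝ) (x : Fin k) : ℝ := alphaR ε * p x + betaR ε
noncomputable def xif (ε : ℝ) (p : Fin k → ℝ) (b : Fin k → Bool) (x : Fin k) : ℝ :=
  Zf b x - qf ε p x
noncomputable def Cf (ε : ℝ) (p : Fin k → ℝ) (x y : Fin k) : ℝ :=
  if x = y then qf ε p x * (1 - qf ε p x) else -(alphaR ε ^ 2 * p x * p y)

/-- Fubini over bits -/
lemma sum_pi_bool (g : Fin k → Bool → ℝ) :
    ∑ b : Fin k → Bool, ∏ j, g j (b j) = ∏ j, (g j true + g j false) := by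
  rw [← Fintype.prod_sum (fun j v => g j v)]
  congr 1; funext j
  simp [Fintype.sum_bool]

/-- expectation under kernel of a product of marked bits -/
lemma sum_ker_ind (ε : ℝ) (t : Fin k) (S : Finset (Fin k)) :
    ∑ b : Fin k → Bool, (∏ j, ker ε t j (b j)) * (∏ j ∈ S, Zf b j)
      = ∏ j ∈ S, ker ε t j true := by
  have h1 : ∀ b : Fin k → Bool, (∏ j, ker ε t j (b j)) * (∏ j ∈ S, Zf b j)
      = ∏ j, (ker ε t j (b j) * (if j ∈ S then Zf b j else 1)) := by
    intro b
    rw [Finset.prod_mul_distrib, Finset.prod_ite_mem univ S (fun j => Zf b j),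
      Finset.univ_inter]
  rw [Finset.sum_congr rfl fun b _ => h1 b]
  simp only [Zf]
  rw [sum_pi_bool (fun j v => ker ε t j v * (if j ∈ S then (if v then (1:ℝ) else 0) else 1))]
  rw [Finset.prod_congr rfl (fun j _ => show
      ker ε t j true * (if j ∈ S then (if true then (1:ℝ) else 0) else 1)
        + ker ε t j false * (if j ∈ S then (if false then (1:ℝ) else 0) else 1)
      = if j ∈ S then ker ε t j true else 1 by
    by_cases hS : j ∈ S <;> simp [hS, ker_sum])]
  rw [Finset.prod_ite_mem univ S (fun j => ker ε t j true), Finset.univ_inter]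



lemma E1_prodZ (ε : ℝ) (p : Fin k → ℝ) (S : Finset (Fin k)) :
    E1 ε p (fun b => ∏ j ∈ S, Zf b j)
      = ∑ t, p t * ∏ j ∈ S, (betaR ε + if j = t then alphaR ε else 0) := by
  unfold E1
  simp only [rapporOne_eq, Finset.sum_mul]
  rw [Finset.sum_comm]
  refine Finset.sum_congr rfl fun t _ => ?_
  have : ∀ b : Fin k → Bool, p t * (∏ j, ker ε t j (b j)) * (∏ j ∈ S, Zf b j)
      = p t * ((∏ j, ker ε t j (b j)) * (∏ j ∈ S, Zf b j)) := fun b => by ring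
  rw [Finset.sum_congr rfl fun b _ => this b, ← Finset.mul_sum, sum_ker_ind]
  rw [Finset.prod_congr rfl fun j _ => ker_true ε t j]

lemma E1_one (ε : ℝ) (p : Fin k → ℝ) (hp1 : ∑ x, p x = 1) :
    E1 ε p (fun _ => 1) = 1 := by
  have h := E1_prodZ ε p ∅
  simpa [hp1] using h

lemma E1_Z (ε : ℝ) (p : Fin k → ℝ) (hp1 : ∑ x, p x = 1) (x : Fin k) :
    E1 ε p (fun b => Zf b x) = qf ε p x := by
  have h := E1_prodZ ε p {x}
  simp only [Finset.prod_singleton] at h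
  rw [h]
  simp only [mul_add, Finset.sum_add_distrib, ← Finset.sum_mul, hp1, mul_ite, mul_zero]
  rw [Finset.sum_ite_eq univ x (fun t => p t * alphaR ε)]
  simp [qf]; ring

lemma E1_ZZ (ε : ℝ) (p : Fin k → ℝ) (hp1 : ∑ x, p x = 1) {x y : Fin k} (hxy : x ≠ y) :
    E1 ε p (fun b => Zf b x * Zf b y)
      = betaR ε ^ 2 + alphaR ε * betaR ε * (p x + p y) := by
  have h := E1_prodZ ε p {x, y}
  have h2 : ∀ b : Fin k → Bool, ∏ j ∈ ({x, y} : Finset (Fin k)), Zf b j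
      = Zf b x * Zf b y := fun b => Finset.prod_pair hxy
  rw [show (fun b => Zf b x * Zf b y) = (fun b => ∏ j ∈ ({x, y} : Finset (Fin k)), Zf b j)
    from funext fun b => (h2 b).symm, h]
  rw [Finset.sum_congr rfl fun t _ => by rw [Finset.prod_pair hxy]]
  have h3 : ∀ t : Fin k,
      p t * ((betaR ε + if x = t then alphaR ε else 0) * (betaR ε + if y = t then alphaR ε else 0))
      = p t * betaR ε ^ 2 + (p t * (if x = t then alphaR ε else 0)) * betaR ε
        + (p t * (if y = t then alphaR ε else 0)) * betaR ε := by
    intro t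
    split_ifs with h1 h2 h2
    · exact absurd (h1.trans h2.symm) hxy
    all_goals ring
  rw [Finset.sum_congr rfl fun t _ => h3 t]
  simp only [Finset.sum_add_distrib, ← Finset.sum_mul, hp1, mul_ite, mul_zero]
  rw [Finset.sum_ite_eq univ x (fun t => p t * alphaR ε),
    Finset.sum_ite_eq univ y (fun t => p t * alphaR ε)]
  simp; ring

lemma E1_add (ε : ℝ) (p : Fin k → ℝ) (g h : (Fin k → Bool) → ℝ) :
    E1 ε p (fun b => g b + h b) = E1 ε p g + E1 ε p h := by
  simp [E1, mul_add, Finset.sum_add_distrib]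

lemma E1_sub (ε : ℝ) (p : Fin k → ℝ) (g h : (Fin k → Bool) → ℝ) :
    E1 ε p (fun b => g b - h b) = E1 ε p g - E1 ε p h := by
  simp [E1, mul_sub, Finset.sum_sub_distrib]

lemma E1_cmul (ε : ℝ) (p : Fin k → ℝ) (c : ℝ) (g : (Fin k → Bool) → ℝ) :
    E1 ε p (fun b => c * g b) = c * E1 ε p g := by
  unfold E1
  rw [Finset.mul_sum]
  exact Finset.sum_congr rfl fun b _ => by ring

lemma E1_xi (ε : ℝ) (p : Fin k → ℝ) (hp1 : ∑ x, p x = 1) (x : Fin k) :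
    E1 ε p (fun b => xif ε p b x) = 0 := by
  have : (fun b => xif ε p b x) = fun b => Zf b x - qf ε p x * 1 := by
    funext b; simp [xif]
  rw [this, E1_sub, E1_cmul, E1_Z ε p hp1, E1_one ε p hp1]
  ring

lemma E1_xx (ε : ℝ) (p : Fin k → ℝ) (hp1 : ∑ x, p x = 1) (x y : Fin k) :
    E1 ε p (fun b => xif ε p b x * xif ε p b y) = Cf ε p x y := by
  have hfun : (fun b => xif ε p b x * xif ε p b y)
      = fun b => (Zf b x * Zf b y - qf ε p x * Zf b y) - qf ε p y * Zf b x
          + (qf ε p x * qf ε p y) * 1 := by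
    funext b; simp only [xif]; ring
  rw [hfun, E1_add, E1_sub, E1_sub, E1_cmul, E1_cmul, E1_cmul,
    E1_Z ε p hp1, E1_Z ε p hp1, E1_one ε p hp1]
  rcases eq_or_ne x y with h | h
  · subst h
    have : (fun b => Zf b x * Zf b x) = fun b => Zf b x := by
      funext b; simp only [Zf]; split_ifs <;> ring
    rw [this, E1_Z ε p hp1, Cf, if_pos rfl]
    ring
  · rw [E1_ZZ ε p hp1 h, Cf, if_neg h]
    simp only [qf]
    ring

/-! ### n-sample machinery -/

noncomputable def Exp (ε : ℝ) (p : Fin k → ℝ) (G : (Fin n → Fin k → Bool) → ℝ) : ℝ :=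
  ∑ B : Fin n → Fin k → Bool, rapporN ε p B * G B

lemma prod_eq_one_pair {ι : Type*} [Fintype ι] [DecidableEq ι] {x y : ι} (hxy : x ≠ y)
    {F : ι → ℝ} (h : ∀ j, j ≠ x → j ≠ y → F j = 1) : ∏ j, F j = F x * F y := by
  rw [← Finset.prod_pair hxy]
  refine (Finset.prod_subset (Finset.subset_univ _) fun j _ hj => ?_).symm
  simp only [Finset.mem_insert, Finset.mem_singleton, not_or] at hj
  exact h j hj.1 hj.2

lemma prod_eq_one_triple {ι : Type*} [Fintype ι] [DecidableEq ι] {x y z : ι}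
    (hxy : x ≠ y) (hxz : x ≠ z) (hyz : y ≠ z)
    {F : ι → ℝ} (h : ∀ j, j ≠ x → j ≠ y → j ≠ z → F j = 1) :
    ∏ j, F j = F x * (F y * F z) := by
  have : ∏ j ∈ ({x, y, z} : Finset ι), F j = F x * (F y * F z) := by
    rw [Finset.prod_insert (by simp [hxy, hxz]), Finset.prod_pair hyz]
  rw [← this]
  refine (Finset.prod_subset (Finset.subset_univ _) fun j _ hj => ?_).symm
  simp only [Finset.mem_insert, Finset.mem_singleton, not_or] at hj
  exact h j hj.1 hj.2.1 hj.2.2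

lemma prod_eq_one_quad {ι : Type*} [Fintype ι] [DecidableEq ι] {x y z w : ι}
    (hxy : x ≠ y) (hxz : x ≠ z) (hxw : x ≠ w) (hyz : y ≠ z) (hyw : y ≠ w) (hzw : z ≠ w)
    {F : ι → ℝ} (h : ∀ j, j ≠ x → j ≠ y → j ≠ z → j ≠ w → F j = 1) :
    ∏ j, F j = F x * F y * (F z * F w) := by
  have : ∏ j ∈ ({x, y, z, w} : Finset ι), F j = F x * F y * (F z * F w) := by
    rw [Finset.prod_insert (by simp [hxy, hxz, hxw]),
      Finset.prod_insert (by simp [hyz, hyw]), Finset.prod_pair hzw]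
    ring
  rw [← this]
  refine (Finset.prod_subset (Finset.subset_univ _) fun j _ hj => ?_).symm
  simp only [Finset.mem_insert, Finset.mem_singleton, not_or] at hj
  exact h j hj.1 hj.2.1 hj.2.2.1 hj.2.2.2

lemma Exp_master (ε : ℝ) (p : Fin k → ℝ) (f : Fin n → (Fin k → Bool) → ℝ) :
    Exp ε p (fun B => ∏ i, f i (B i)) = ∏ i, E1 ε p (f i) := by
  unfold Exp E1 rapporN
  rw [Fintype.prod_sum (fun (i : Fin n) (b : Fin k → Bool) => rapporOne ε p b * f i b)]
  exact Finset.sum_congr rfl fun B _ => (Finset.prod_mul_distrib).symm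

lemma Exp_congr (ε : ℝ) (p : Fin k → ℝ) {F G : (Fin n → Fin k → Bool) → ℝ}
    (h : ∀ B, F B = G B) : Exp ε p F = Exp ε p G := by
  unfold Exp; exact Finset.sum_congr rfl fun B _ => by rw [h B]

lemma Exp_add (ε : ℝ) (p : Fin k → ℝ) (F G : (Fin n → Fin k → Bool) → ℝ) :
    Exp ε p (fun B => F B + G B) = Exp ε p F + Exp ε p G := by
  simp [Exp, mul_add, Finset.sum_add_distrib]

lemma Exp_cmul (ε : ℝ) (p : Fin k → ℝ) (c : ℝ) (G : (Fin n → Fin k → Bool) → ℝ) :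
    Exp ε p (fun B => c * G B) = c * Exp ε p G := by
  unfold Exp
  rw [Finset.mul_sum]
  exact Finset.sum_congr rfl fun B _ => by ring

lemma Exp_sum (ε : ℝ) (p : Fin k → ℝ) {ι : Type*} (s : Finset ι)
    (G : ι → (Fin n → Fin k → Bool) → ℝ) :
    Exp ε p (fun B => ∑ a ∈ s, G a B) = ∑ a ∈ s, Exp ε p (G a) := by
  unfold Exp
  simp only [Finset.mul_sum]
  exact Finset.sum_comm

lemma Exp_one (ε : ℝ) (p : Fin k → ℝ) (hp1 : ∑ x, p x = 1) :
    Exp ε p (fun _ : Fin n → Fin k → Bool => (1:ℝ)) = 1 := by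
  have h := Exp_master ε p (n := n) (fun _ => fun _ => (1:ℝ))
  simp only [Finset.prod_const_one] at h
  rw [h, Finset.prod_congr rfl fun i _ => E1_one ε p hp1, Finset.prod_const_one]

lemma Exp_F1 (ε : ℝ) (p : Fin k → ℝ) (hp1 : ∑ x, p x = 1) (i : Fin n)
    (g : (Fin k → Bool) → ℝ) :
    Exp ε p (fun B => g (B i)) = E1 ε p g := by
  classical
  set f : Fin n → (Fin k → Bool) → ℝ := fun i' => if i' = i then g else fun _ => 1 with hf
  have h1 : ∀ B : Fin n → Fin k → Bool, g (B i) = ∏ i', f i' (B i') := by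
    intro B
    rw [Finset.prod_eq_single i (fun j _ hj => by simp [hf, hj]) (by simp)]
    simp [hf]
  rw [Exp_congr ε p h1, Exp_master,
    Finset.prod_eq_single i (fun j _ hj => by
      simp only [hf, if_neg hj]; exact E1_one ε p hp1) (by simp)]
  simp [hf]

lemma Exp_F2 (ε : ℝ) (p : Fin k → ℝ) (hp1 : ∑ x, p x = 1) {i j : Fin n} (hij : i ≠ j)
    (g h : (Fin k → Bool) → ℝ) :
    Exp ε p (fun B => g (B i) * h (B j)) = E1 ε p g * E1 ε p h := by
  classical
  set f : Fin n → (Fin k → Bool) → ℝ :=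
    fun i' => if i' = i then g else if i' = j then h else fun _ => 1 with hf
  have h1 : ∀ B : Fin n → Fin k → Bool, g (B i) * h (B j) = ∏ i', f i' (B i') := by
    intro B
    rw [prod_eq_one_pair hij (F := fun i' => f i' (B i'))
      (fun a ha hb => by simp [hf, ha, hb])]
    simp [hf, hij.symm]
  rw [Exp_congr ε p h1, Exp_master,
    prod_eq_one_pair hij (F := fun i' => E1 ε p (f i'))
      (fun a ha hb => by simp only [hf, if_neg ha, if_neg hb]; exact E1_one ε p hp1)]
  simp [hf, hij.symm]

lemma Exp_F3 (ε : ℝ) (p : Fin k → ℝ) (hp1 : ∑ x, p x = 1) {i l m : Fin n}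
    (hil : i ≠ l) (him : i ≠ m) (hlm : l ≠ m)
    (g u v : (Fin k → Bool) → ℝ) :
    Exp ε p (fun B => g (B i) * (u (B l) * v (B m)))
      = E1 ε p g * (E1 ε p u * E1 ε p v) := by
  classical
  set f : Fin n → (Fin k → Bool) → ℝ :=
    fun i' => if i' = i then g else if i' = l then u else if i' = m then v
      else fun _ => 1 with hf
  have h1 : ∀ B : Fin n → Fin k → Bool,
      g (B i) * (u (B l) * v (B m)) = ∏ i', f i' (B i') := by
    intro B
    rw [prod_eq_one_triple hil him hlm (F := fun i' => f i' (B i'))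
      (fun a ha hb hc => by simp [hf, ha, hb, hc])]
    simp [hf, hil.symm, him.symm, hlm.symm]
  rw [Exp_congr ε p h1, Exp_master,
    prod_eq_one_triple hil him hlm (F := fun i' => E1 ε p (f i'))
      (fun a ha hb hc => by
        simp only [hf, if_neg ha, if_neg hb, if_neg hc]; exact E1_one ε p hp1)]
  simp [hf, hil.symm, him.symm, hlm.symm]

lemma Exp_F4 (ε : ℝ) (p : Fin k → ℝ) (hp1 : ∑ x, p x = 1) {i j l m : Fin n}
    (hij : i ≠ j) (hil : i ≠ l) (him : i ≠ m) (hjl : j ≠ l) (hjm : j ≠ m) (hlm : l ≠ m)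
    (g h u v : (Fin k → Bool) → ℝ) :
    Exp ε p (fun B => g (B i) * h (B j) * (u (B l) * v (B m)))
      = E1 ε p g * E1 ε p h * (E1 ε p u * E1 ε p v) := by
  classical
  set f : Fin n → (Fin k → Bool) → ℝ :=
    fun i' => if i' = i then g else if i' = j then h else if i' = l then u
      else if i' = m then v else fun _ => 1 with hf
  have h1 : ∀ B : Fin n → Fin k → Bool,
      g (B i) * h (B j) * (u (B l) * v (B m)) = ∏ i', f i' (B i') := by
    intro B
    rw [prod_eq_one_quad hij hil him hjl hjm hlm (F := fun i' => f i' (B i'))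
      (fun a ha hb hc hd => by simp [hf, ha, hb, hc, hd])]
    simp [hf, hij.symm, hil.symm, him.symm, hjl.symm, hjm.symm, hlm.symm]
  rw [Exp_congr ε p h1, Exp_master,
    prod_eq_one_quad hij hil him hjl hjm hlm (F := fun i' => E1 ε p (f i'))
      (fun a ha hb hc hd => by
        simp only [hf, if_neg ha, if_neg hb, if_neg hc, if_neg hd]
        exact E1_one ε p hp1)]
  simp [hf, hij.symm, hil.symm, him.symm, hjl.symm, hjm.symm, hlm.symm]

/-! ### statistic pieces -/

noncomputable def lam (ε : ℝ) (k : ℕ) : ℝ := alphaR ε / k + betaR ε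
noncomputable def deltaf (ε : ℝ) (p : Fin k → ℝ) (x : Fin k) : ℝ := qf ε p x - lam ε k
noncomputable def sP (ε : ℝ) (p : Fin k → ℝ) : ℝ := ∑ x, deltaf ε p x ^ 2
noncomputable def DCD (ε : ℝ) (p : Fin k → ℝ) : ℝ :=
  ∑ x, ∑ y, deltaf ε p x * deltaf ε p y * Cf ε p x y
noncomputable def CF2 (ε : ℝ) (p : Fin k → ℝ) : ℝ := ∑ x, ∑ y, Cf ε p x y * Cf ε p x y
noncomputable def Lf (ε : ℝ) (p : Fin k → ℝ) (n : ℕ) (B : Fin n → Fin k → Bool) : ℝ :=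
  2 * ((n : ℝ) - 1) * ∑ i, ∑ x, deltaf ε p x * xif ε p (B i) x
noncomputable def Qf (ε : ℝ) (p : Fin k → ℝ) (n : ℕ) (B : Fin n → Fin k → Bool) : ℝ :=
  ∑ ij ∈ (univ : Finset (Fin n)).offDiag, ∑ x, xif ε p (B ij.1) x * xif ε p (B ij.2) x

lemma sum_offDiag_eq (f : Fin n × Fin n → ℝ) :
    ∑ ij ∈ (univ : Finset (Fin n)).offDiag, f ij
      = (∑ i, ∑ j, f (i, j)) - ∑ i, f (i, i) := by
  have hd := Finset.sum_union (f := f) (Finset.disjoint_diag_offDiag (univ : Finset (Fin n)))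
  rw [Finset.diag_union_offDiag] at hd
  have h1 : ∑ ij ∈ ((univ : Finset (Fin n)) ×ˢ univ), f ij = ∑ i, ∑ j, f (i, j) :=
    Finset.sum_product _ _ _
  have h2 : ∑ ij ∈ (univ : Finset (Fin n)).diag, f ij = ∑ i, f (i, i) :=
    Finset.sum_diag univ f
  linarith

lemma sum_offDiag_fst (g : Fin n → ℝ) :
    ∑ ij ∈ (univ : Finset (Fin n)).offDiag, g ij.1 = ((n : ℝ) - 1) * ∑ i, g i := by
  rw [sum_offDiag_eq]
  simp only [Finset.sum_const, Finset.card_univ, Fintype.card_fin, nsmul_eq_mul]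
  rw [← Finset.mul_sum]
  ring

lemma sum_offDiag_snd (g : Fin n → ℝ) :
    ∑ ij ∈ (univ : Finset (Fin n)).offDiag, g ij.2 = ((n : ℝ) - 1) * ∑ i, g i := by
  rw [sum_offDiag_eq, Finset.sum_comm]
  simp only [Finset.sum_const, Finset.card_univ, Fintype.card_fin, nsmul_eq_mul]
  rw [← Finset.mul_sum]
  ring

lemma card_offDiag_real : (((univ : Finset (Fin n)).offDiag.card : ℝ)) = (n : ℝ) ^ 2 - n := by
  rw [Finset.offDiag_card]
  simp only [Finset.card_univ, Fintype.card_fin]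
  have hnn : n ≤ n * n := by
    rcases Nat.eq_zero_or_pos n with rfl | h
    · simp
    · exact Nat.le_mul_of_pos_left _ h
  push_cast [Nat.cast_sub hnn]
  ring

lemma T_decomp (ε : ℝ) (p : Fin k → ℝ) (B : Fin n → Fin k → Bool) :
    Tstat ε B = ((n : ℝ) ^ 2 - n) * sP ε p + Lf ε p n B + Qf ε p n B := by
  set c := lam ε k with hc
  have hsq : ∀ (b : Fin k → Bool) (x : Fin k), Zf b x * Zf b x = Zf b x := by
    intro b x; simp only [Zf]; split_ifs <;> ring
  have hN : ∀ x, Ncount B x = ∑ i, Zf (B i) x := fun x => rfl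
  -- step A : per-coordinate identity
  have hx : ∀ x : Fin k,
      (Ncount B x - ((n : ℝ) - 1) * c) ^ 2 - Ncount B x + ((n : ℝ) - 1) * c ^ 2
        = ∑ ij ∈ (univ : Finset (Fin n)).offDiag,
            (Zf (B ij.1) x - c) * (Zf (B ij.2) x - c) := by
    intro x
    rw [sum_offDiag_eq (fun ij => (Zf (B ij.1) x - c) * (Zf (B ij.2) x - c))]
    have hsum : ∑ i, (Zf (B i) x - c) = Ncount B x - n * c := by
      rw [Finset.sum_sub_distrib, ← hN x]
      simp [Finset.card_univ, mul_comm]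
    have e1 : ∑ i, ∑ j, (Zf (B i) x - c) * (Zf (B j) x - c)
        = (Ncount B x - n * c) * (Ncount B x - n * c) := by
      rw [← Finset.sum_mul_sum, hsum]
    have e2 : ∑ i, (Zf (B i) x - c) * (Zf (B i) x - c)
        = Ncount B x - 2 * c * Ncount B x + n * c ^ 2 := by
      have h3 : ∀ i : Fin n, (Zf (B i) x - c) * (Zf (B i) x - c)
          = Zf (B i) x - 2 * c * Zf (B i) x + c ^ 2 := fun i =>
        by linear_combination hsq (B i) x
      rw [Finset.sum_congr rfl fun i _ => h3 i]
      rw [Finset.sum_add_distrib, Finset.sum_sub_distrib, ← Finset.mul_sum, ← hN x]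
      simp [Finset.card_univ, mul_comm]
    rw [e1, e2]
    ring
  -- assemble
  have hT : Tstat ε B = ∑ x : Fin k,
      ((Ncount B x - ((n : ℝ) - 1) * c) ^ 2 - Ncount B x + ((n : ℝ) - 1) * c ^ 2) := by
    unfold Tstat
    rw [Finset.sum_add_distrib]
    simp only [Finset.sum_const, Finset.card_univ, Fintype.card_fin, nsmul_eq_mul, hc, lam]
    ring
  rw [hT, Finset.sum_congr rfl fun x _ => hx x, Finset.sum_comm]
  -- substitute Z − λ = ξ + δ and expand
  have hsub : ∀ (ij : Fin n × Fin n), ∑ x : Fin k,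
      (Zf (B ij.1) x - c) * (Zf (B ij.2) x - c)
      = (∑ x, deltaf ε p x ^ 2)
        + ((∑ x, deltaf ε p x * xif ε p (B ij.1) x)
        + (∑ x, deltaf ε p x * xif ε p (B ij.2) x)
        + ∑ x, xif ε p (B ij.1) x * xif ε p (B ij.2) x) := by
    intro ij
    rw [← Finset.sum_add_distrib, ← Finset.sum_add_distrib, ← Finset.sum_add_distrib]
    refine Finset.sum_congr rfl fun x _ => ?_
    have h1 : Zf (B ij.1) x - c = xif ε p (B ij.1) x + deltaf ε p x := by
      simp only [xif, deltaf, hc]; ring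
    have h2 : Zf (B ij.2) x - c = xif ε p (B ij.2) x + deltaf ε p x := by
      simp only [xif, deltaf, hc]; ring
    rw [h1, h2]; ring
  rw [Finset.sum_congr rfl fun ij _ => hsub ij]
  rw [Finset.sum_add_distrib, Finset.sum_add_distrib, Finset.sum_add_distrib]
  have c1 : ∑ _ij ∈ (univ : Finset (Fin n)).offDiag, (∑ x, deltaf ε p x ^ 2)
      = ((n : ℝ) ^ 2 - n) * sP ε p := by
    rw [Finset.sum_const, nsmul_eq_mul, card_offDiag_real, sP]
  have c2 : ∑ ij ∈ (univ : Finset (Fin n)).offDiag,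
      (∑ x, deltaf ε p x * xif ε p (B ij.1) x)
      = ((n : ℝ) - 1) * ∑ i, ∑ x, deltaf ε p x * xif ε p (B i) x :=
    sum_offDiag_fst (fun i => ∑ x, deltaf ε p x * xif ε p (B i) x)
  have c3 : ∑ ij ∈ (univ : Finset (Fin n)).offDiag,
      (∑ x, deltaf ε p x * xif ε p (B ij.2) x)
      = ((n : ℝ) - 1) * ∑ i, ∑ x, deltaf ε p x * xif ε p (B i) x :=
    sum_offDiag_snd (fun i => ∑ x, deltaf ε p x * xif ε p (B i) x)
  rw [c1, c2, c3]
  simp only [Lf, Qf]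
  ring

variable {ε : ℝ} {p : Fin k → ℝ}

lemma Exp_xi2 (hp1 : ∑ x, p x = 1) (i l : Fin n) (x y : Fin k) :
    Exp ε p (fun B => xif ε p (B i) x * xif ε p (B l) y)
      = if i = l then Cf ε p x y else 0 := by
  rcases eq_or_ne i l with rfl | h
  · rw [if_pos rfl]
    exact (Exp_F1 ε p hp1 i (fun b => xif ε p b x * xif ε p b y)).trans
      (E1_xx ε p hp1 x y)
  · rw [if_neg h]
    have := Exp_F2 ε p hp1 h (fun b => xif ε p b x) (fun b => xif ε p b y)
    rw [E1_xi ε p hp1, zero_mul] at this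
    exact this

lemma Exp_xi3 (hp1 : ∑ x, p x = 1) {i l m : Fin n} (hlm : l ≠ m) (x y : Fin k) :
    Exp ε p (fun B => xif ε p (B i) x * (xif ε p (B l) y * xif ε p (B m) y)) = 0 := by
  rcases eq_or_ne i l with rfl | hil
  · have h2 := Exp_F2 ε p hp1 hlm (fun b => xif ε p b x * xif ε p b y)
      (fun b => xif ε p b y)
    rw [E1_xi ε p hp1, mul_zero] at h2
    exact (Exp_congr ε p (G := fun B => (fun b => xif ε p b x * xif ε p b y) (B i)
      * (fun b => xif ε p b y) (B m)) (fun B => by ring)).trans h2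
  rcases eq_or_ne i m with rfl | him
  · have h2 := Exp_F2 ε p hp1 hil (fun b => xif ε p b x * xif ε p b y)
      (fun b => xif ε p b y)
    rw [E1_xi ε p hp1, mul_zero] at h2
    exact (Exp_congr ε p (G := fun B => (fun b => xif ε p b x * xif ε p b y) (B i)
      * (fun b => xif ε p b y) (B l)) (fun B => by ring)).trans h2
  · have h3 := Exp_F3 ε p hp1 hil him hlm (fun b => xif ε p b x)
      (fun b => xif ε p b y) (fun b => xif ε p b y)
    rw [E1_xi ε p hp1, zero_mul] at h3
    exact h3

lemma Exp_xi4 (hp1 : ∑ x, p x = 1) {i j l m : Fin n} (hij : i ≠ j) (hlm : l ≠ m)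
    (x y : Fin k) :
    Exp ε p (fun B => xif ε p (B i) x * xif ε p (B j) x
        * (xif ε p (B l) y * xif ε p (B m) y))
      = if (l = i ∧ m = j) ∨ (l = j ∧ m = i)
          then Cf ε p x y * Cf ε p x y else 0 := by
  have gxy : (Fin k → Bool) → ℝ := fun b => xif ε p b x * xif ε p b y
  rcases eq_or_ne l i with rfl | hli
  · rcases eq_or_ne m j with rfl | hmj
    · rw [if_pos (Or.inl ⟨rfl, rfl⟩)]
      have h2 := Exp_F2 ε p hp1 hlm (fun b => xif ε p b x * xif ε p b y)
        (fun b => xif ε p b x * xif ε p b y)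
      rw [E1_xx ε p hp1] at h2
      exact (Exp_congr ε p (G := fun B => (fun b => xif ε p b x * xif ε p b y) (B l)
        * (fun b => xif ε p b x * xif ε p b y) (B m)) (fun B => by ring)).trans h2
    · rw [if_neg (by simp [hmj, hij])]
      have h3 := Exp_F3 ε p hp1 (Ne.symm hij) (Ne.symm hmj) hlm
        (fun b => xif ε p b x) (fun b => xif ε p b x * xif ε p b y)
        (fun b => xif ε p b y)
      rw [E1_xi ε p hp1, zero_mul] at h3
      exact (Exp_congr ε p (G := fun B => (fun b => xif ε p b x) (B j)
        * ((fun b => xif ε p b x * xif ε p b y) (B l)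
          * (fun b => xif ε p b y) (B m))) (fun B => by ring)).trans h3
  rcases eq_or_ne m i with rfl | hmi
  · rcases eq_or_ne l j with rfl | hlj
    · rw [if_pos (Or.inr ⟨rfl, rfl⟩)]
      have h2 := Exp_F2 ε p hp1 (Ne.symm hlm) (fun b => xif ε p b x * xif ε p b y)
        (fun b => xif ε p b x * xif ε p b y)
      rw [E1_xx ε p hp1] at h2
      exact (Exp_congr ε p (G := fun B => (fun b => xif ε p b x * xif ε p b y) (B m)
        * (fun b => xif ε p b x * xif ε p b y) (B l)) (fun B => by ring)).trans h2
    · rw [if_neg (by simp [hli, hlj])]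
      have h3 := Exp_F3 ε p hp1 (Ne.symm hij) (Ne.symm hlj) (Ne.symm hlm)
        (fun b => xif ε p b x) (fun b => xif ε p b x * xif ε p b y)
        (fun b => xif ε p b y)
      rw [E1_xi ε p hp1, zero_mul] at h3
      exact (Exp_congr ε p (G := fun B => (fun b => xif ε p b x) (B j)
        * ((fun b => xif ε p b x * xif ε p b y) (B m)
          * (fun b => xif ε p b y) (B l))) (fun B => by ring)).trans h3
  rcases eq_or_ne l j with rfl | hlj
  · rw [if_neg (by simp [hli, hmi])]
    have h3 := Exp_F3 ε p hp1 hij (Ne.symm hmi) hlm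
      (fun b => xif ε p b x) (fun b => xif ε p b x * xif ε p b y)
      (fun b => xif ε p b y)
    rw [E1_xi ε p hp1, zero_mul] at h3
    exact (Exp_congr ε p (G := fun B => (fun b => xif ε p b x) (B i)
      * ((fun b => xif ε p b x * xif ε p b y) (B l)
        * (fun b => xif ε p b y) (B m))) (fun B => by ring)).trans h3
  rcases eq_or_ne m j with rfl | hmj
  · rw [if_neg (by simp [hli, hlj])]
    have h3 := Exp_F3 ε p hp1 hij (Ne.symm hli) (Ne.symm hlm)
      (fun b => xif ε p b x) (fun b => xif ε p b x * xif ε p b y)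
      (fun b => xif ε p b y)
    rw [E1_xi ε p hp1, zero_mul] at h3
    exact (Exp_congr ε p (G := fun B => (fun b => xif ε p b x) (B i)
      * ((fun b => xif ε p b x * xif ε p b y) (B m)
        * (fun b => xif ε p b y) (B l))) (fun B => by ring)).trans h3
  · rw [if_neg (by simp [hli, hlj, hmi, hmj])]
    have h4 := Exp_F4 ε p hp1 hij (Ne.symm hli) (Ne.symm hmi) (Ne.symm hlj)
      (Ne.symm hmj) hlm (fun b => xif ε p b x) (fun b => xif ε p b x)
      (fun b => xif ε p b y) (fun b => xif ε p b y)
    rw [E1_xi ε p hp1, zero_mul, zero_mul] at h4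
    exact h4

lemma Exp_const (hp1 : ∑ x, p x = 1) (c : ℝ) :
    Exp ε p (fun _ : Fin n → Fin k → Bool => c) = c := by
  have h := Exp_cmul ε p (n := n) c (fun _ => 1)
  rw [Exp_one ε p hp1, mul_one] at h
  exact h

lemma Exp_L0 (hp1 : ∑ x, p x = 1) : Exp ε p (Lf ε p n) = 0 := by
  have h0 : ∀ (i : Fin n) (x : Fin k),
      Exp ε p (fun B => deltaf ε p x * xif ε p (B i) x) = 0 := by
    intro i x
    have h1 := Exp_cmul ε p (deltaf ε p x) (fun B => xif ε p (B i) x)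
    have h2 := (Exp_F1 ε p hp1 i (fun b => xif ε p b x)).trans (E1_xi ε p hp1 x)
    rw [h2, mul_zero] at h1
    exact h1
  calc Exp ε p (Lf ε p n)
      = 2 * ((n : ℝ) - 1)
        * Exp ε p (fun B => ∑ i, ∑ x, deltaf ε p x * xif ε p (B i) x) :=
        Exp_cmul ε p _ _
    _ = 0 := by
        rw [Exp_sum ε p univ (fun i B => ∑ x, deltaf ε p x * xif ε p (B i) x)]
        rw [Finset.sum_congr rfl fun i _ =>
          Exp_sum ε p univ (fun x B => deltaf ε p x * xif ε p (B i) x)]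
        rw [Finset.sum_congr rfl fun i _ => Finset.sum_congr rfl fun x _ => h0 i x]
        simp

lemma Exp_Q0 (hp1 : ∑ x, p x = 1) : Exp ε p (Qf ε p n) = 0 := by
  have hbr : Exp ε p (Qf ε p n) = Exp ε p (fun B => ∑ ij ∈ (univ : Finset (Fin n)).offDiag,
      ∑ x, xif ε p (B ij.1) x * xif ε p (B ij.2) x) := rfl
  calc Exp ε p (Qf ε p n)
      = ∑ ij ∈ (univ : Finset (Fin n)).offDiag,
          Exp ε p (fun B => ∑ x, xif ε p (B ij.1) x * xif ε p (B ij.2) x) :=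
        hbr.trans (Exp_sum ε p ((univ : Finset (Fin n)).offDiag)
          (fun ij B => ∑ x, xif ε p (B ij.1) x * xif ε p (B ij.2) x))
    _ = 0 := by
        refine Finset.sum_eq_zero fun ij hij => ?_
        rw [Exp_sum ε p univ (fun x B => xif ε p (B ij.1) x * xif ε p (B ij.2) x)]
        refine Finset.sum_eq_zero fun x _ => ?_
        rw [Exp_xi2 hp1 ij.1 ij.2 x x,
          if_neg (Finset.mem_offDiag.mp hij).2.2]

lemma Exp_LL (hp1 : ∑ x, p x = 1) :
    Exp ε p (fun B => Lf ε p n B * Lf ε p n B)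
      = 4 * ((n : ℝ) - 1) ^ 2 * ((n : ℝ) * DCD ε p) := by
  have hpt : ∀ B : Fin n → Fin k → Bool, Lf ε p n B * Lf ε p n B
      = (4 * ((n : ℝ) - 1) ^ 2) * ∑ i, ∑ l, ∑ x, ∑ y,
          (deltaf ε p x * deltaf ε p y) * (xif ε p (B i) x * xif ε p (B l) y) := by
    intro B
    simp only [Lf]
    have e1 := Finset.sum_mul_sum univ univ
      (fun i => ∑ x, deltaf ε p x * xif ε p (B i) x)
      (fun l => ∑ x, deltaf ε p x * xif ε p (B l) x)
    have e2 : ∀ i l : Fin n, (∑ x, deltaf ε p x * xif ε p (B i) x)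
        * (∑ x, deltaf ε p x * xif ε p (B l) x)
        = ∑ x, ∑ y, (deltaf ε p x * deltaf ε p y)
            * (xif ε p (B i) x * xif ε p (B l) y) := by
      intro i l
      rw [Finset.sum_mul_sum univ univ (fun x => deltaf ε p x * xif ε p (B i) x)
        (fun y => deltaf ε p y * xif ε p (B l) y)]
      exact Finset.sum_congr rfl fun x _ => Finset.sum_congr rfl fun y _ => by ring
    calc (2 * ((n : ℝ) - 1) * ∑ i, ∑ x, deltaf ε p x * xif ε p (B i) x)
          * (2 * ((n : ℝ) - 1) * ∑ i, ∑ x, deltaf ε p x * xif ε p (B i) x)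
        = 4 * ((n : ℝ) - 1) ^ 2 * ((∑ i, ∑ x, deltaf ε p x * xif ε p (B i) x)
            * (∑ i, ∑ x, deltaf ε p x * xif ε p (B i) x)) := by ring
      _ = 4 * ((n : ℝ) - 1) ^ 2 * ∑ i, ∑ l, ∑ x, ∑ y,
            (deltaf ε p x * deltaf ε p y) * (xif ε p (B i) x * xif ε p (B l) y) := by
          rw [e1, Finset.sum_congr rfl fun i _ => Finset.sum_congr rfl fun l _ => e2 i l]
  rw [Exp_congr ε p (G := fun B => (4 * ((n : ℝ) - 1) ^ 2) * ∑ i, ∑ l, ∑ x, ∑ y,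
      (deltaf ε p x * deltaf ε p y) * (xif ε p (B i) x * xif ε p (B l) y)) hpt]
  rw [Exp_cmul ε p (4 * ((n : ℝ) - 1) ^ 2) (fun B => ∑ i, ∑ l, ∑ x, ∑ y,
      (deltaf ε p x * deltaf ε p y) * (xif ε p (B i) x * xif ε p (B l) y))]
  rw [Exp_sum ε p univ (fun i B => ∑ l, ∑ x, ∑ y,
      (deltaf ε p x * deltaf ε p y) * (xif ε p (B i) x * xif ε p (B l) y))]
  rw [Finset.sum_congr rfl fun i _ => Exp_sum ε p univ (fun l B => ∑ x, ∑ y,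
      (deltaf ε p x * deltaf ε p y) * (xif ε p (B i) x * xif ε p (B l) y))]
  rw [Finset.sum_congr rfl fun i _ => Finset.sum_congr rfl fun l _ =>
    Exp_sum ε p univ (fun x B => ∑ y,
      (deltaf ε p x * deltaf ε p y) * (xif ε p (B i) x * xif ε p (B l) y))]
  rw [Finset.sum_congr rfl fun i _ => Finset.sum_congr rfl fun l _ =>
    Finset.sum_congr rfl fun x _ => Exp_sum ε p univ (fun y B =>
      (deltaf ε p x * deltaf ε p y) * (xif ε p (B i) x * xif ε p (B l) y))]
  have hinner : ∀ (i l : Fin n) (x y : Fin k),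
      Exp ε p (fun B => (deltaf ε p x * deltaf ε p y)
        * (xif ε p (B i) x * xif ε p (B l) y))
      = deltaf ε p x * deltaf ε p y * (if i = l then Cf ε p x y else 0) := by
    intro i l x y
    rw [Exp_cmul ε p (deltaf ε p x * deltaf ε p y)
      (fun B => xif ε p (B i) x * xif ε p (B l) y), Exp_xi2 hp1 i l x y]
  rw [Finset.sum_congr rfl fun i _ => Finset.sum_congr rfl fun l _ =>
    Finset.sum_congr rfl fun x _ => Finset.sum_congr rfl fun y _ => hinner i l x y]
  have hcol : ∀ i l : Fin n,
      (∑ x, ∑ y, deltaf ε p x * deltaf ε p y * (if i = l then Cf ε p x y else 0))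
      = if i = l then DCD ε p else 0 := by
    intro i l
    by_cases h : i = l <;> simp [h, DCD]
  rw [Finset.sum_congr rfl fun i _ => Finset.sum_congr rfl fun l _ => hcol i l]
  rw [Finset.sum_congr rfl fun i _ => Finset.sum_ite_eq univ i (fun _ => DCD ε p)]
  simp [Finset.card_univ, mul_comm]

lemma Exp_LQ0 (hp1 : ∑ x, p x = 1) :
    Exp ε p (fun B => Lf ε p n B * Qf ε p n B) = 0 := by
  have hpt : ∀ B : Fin n → Fin k → Bool, Lf ε p n B * Qf ε p n B
      = (2 * ((n : ℝ) - 1)) * ∑ i, ∑ ij ∈ (univ : Finset (Fin n)).offDiag, ∑ x, ∑ y,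
          deltaf ε p x * (xif ε p (B i) x * (xif ε p (B ij.1) y * xif ε p (B ij.2) y)) := by
    intro B
    simp only [Lf, Qf]
    have e1 := Finset.sum_mul_sum univ ((univ : Finset (Fin n)).offDiag)
      (fun i => ∑ x, deltaf ε p x * xif ε p (B i) x)
      (fun ij => ∑ x, xif ε p (B ij.1) x * xif ε p (B ij.2) x)
    have e2 : ∀ (i : Fin n) (ij : Fin n × Fin n),
        (∑ x, deltaf ε p x * xif ε p (B i) x)
          * (∑ x, xif ε p (B ij.1) x * xif ε p (B ij.2) x)
        = ∑ x, ∑ y, deltaf ε p x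
            * (xif ε p (B i) x * (xif ε p (B ij.1) y * xif ε p (B ij.2) y)) := by
      intro i ij
      rw [Finset.sum_mul_sum univ univ (fun x => deltaf ε p x * xif ε p (B i) x)
        (fun y => xif ε p (B ij.1) y * xif ε p (B ij.2) y)]
      exact Finset.sum_congr rfl fun x _ => Finset.sum_congr rfl fun y _ => by ring
    calc (2 * ((n : ℝ) - 1) * ∑ i, ∑ x, deltaf ε p x * xif ε p (B i) x)
          * (∑ ij ∈ (univ : Finset (Fin n)).offDiag, ∑ x,
              xif ε p (B ij.1) x * xif ε p (B ij.2) x)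
        = 2 * ((n : ℝ) - 1) * ((∑ i, ∑ x, deltaf ε p x * xif ε p (B i) x)
            * (∑ ij ∈ (univ : Finset (Fin n)).offDiag, ∑ x,
              xif ε p (B ij.1) x * xif ε p (B ij.2) x)) := by ring
      _ = 2 * ((n : ℝ) - 1) * ∑ i, ∑ ij ∈ (univ : Finset (Fin n)).offDiag, ∑ x, ∑ y,
            deltaf ε p x * (xif ε p (B i) x
              * (xif ε p (B ij.1) y * xif ε p (B ij.2) y)) := by
          rw [e1, Finset.sum_congr rfl fun i _ => Finset.sum_congr rfl fun ij _ => e2 i ij]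
  rw [Exp_congr ε p (G := fun B => (2 * ((n : ℝ) - 1)) * ∑ i,
      ∑ ij ∈ (univ : Finset (Fin n)).offDiag, ∑ x, ∑ y,
      deltaf ε p x * (xif ε p (B i) x * (xif ε p (B ij.1) y * xif ε p (B ij.2) y))) hpt]
  rw [Exp_cmul ε p (2 * ((n : ℝ) - 1)) (fun B => ∑ i,
      ∑ ij ∈ (univ : Finset (Fin n)).offDiag, ∑ x, ∑ y,
      deltaf ε p x * (xif ε p (B i) x * (xif ε p (B ij.1) y * xif ε p (B ij.2) y)))]
  rw [Exp_sum ε p univ (fun i B => ∑ ij ∈ (univ : Finset (Fin n)).offDiag, ∑ x, ∑ y,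
      deltaf ε p x * (xif ε p (B i) x * (xif ε p (B ij.1) y * xif ε p (B ij.2) y)))]
  have hz : ∀ i : Fin n, ∀ ij ∈ (univ : Finset (Fin n)).offDiag, ∀ (x y : Fin k),
      Exp ε p (fun B => deltaf ε p x
        * (xif ε p (B i) x * (xif ε p (B ij.1) y * xif ε p (B ij.2) y))) = 0 := by
    intro i ij hij x y
    have h1 := Exp_cmul ε p (deltaf ε p x)
      (fun B => xif ε p (B i) x * (xif ε p (B ij.1) y * xif ε p (B ij.2) y))
    rw [Exp_xi3 hp1 (Finset.mem_offDiag.mp hij).2.2 x y, mul_zero] at h1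
    exact h1
  rw [Finset.sum_congr rfl fun i _ =>
    Exp_sum ε p ((univ : Finset (Fin n)).offDiag) (fun ij B => ∑ x, ∑ y,
      deltaf ε p x * (xif ε p (B i) x * (xif ε p (B ij.1) y * xif ε p (B ij.2) y)))]
  rw [Finset.sum_congr rfl fun i _ => Finset.sum_congr rfl fun ij hij =>
    Exp_sum ε p univ (fun x B => ∑ y,
      deltaf ε p x * (xif ε p (B i) x * (xif ε p (B ij.1) y * xif ε p (B ij.2) y)))]
  rw [Finset.sum_congr rfl fun i _ => Finset.sum_congr rfl fun ij hij =>
    Finset.sum_congr rfl fun x _ => Exp_sum ε p univ (fun y B =>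
      deltaf ε p x * (xif ε p (B i) x * (xif ε p (B ij.1) y * xif ε p (B ij.2) y)))]
  rw [Finset.sum_congr rfl fun i _ => Finset.sum_congr rfl fun ij hij =>
    Finset.sum_congr rfl fun x _ => Finset.sum_congr rfl fun y _ => hz i ij hij x y]
  simp

lemma Exp_QQ (hp1 : ∑ x, p x = 1) :
    Exp ε p (fun B => Qf ε p n B * Qf ε p n B)
      = ((n : ℝ) ^ 2 - n) * (2 * CF2 ε p) := by
  have hpt : ∀ B : Fin n → Fin k → Bool, Qf ε p n B * Qf ε p n B
      = ∑ q ∈ (univ : Finset (Fin n)).offDiag, ∑ r ∈ (univ : Finset (Fin n)).offDiag,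
          ∑ x, ∑ y, xif ε p (B q.1) x * xif ε p (B q.2) x
            * (xif ε p (B r.1) y * xif ε p (B r.2) y) := by
    intro B
    simp only [Qf]
    rw [Finset.sum_mul_sum ((univ : Finset (Fin n)).offDiag)
      ((univ : Finset (Fin n)).offDiag)
      (fun q => ∑ x, xif ε p (B q.1) x * xif ε p (B q.2) x)
      (fun r => ∑ x, xif ε p (B r.1) x * xif ε p (B r.2) x)]
    refine Finset.sum_congr rfl fun q _ => Finset.sum_congr rfl fun r _ => ?_
    rw [Finset.sum_mul_sum univ univ (fun x => xif ε p (B q.1) x * xif ε p (B q.2) x)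
      (fun y => xif ε p (B r.1) y * xif ε p (B r.2) y)]
  rw [Exp_congr ε p (G := fun B => ∑ q ∈ (univ : Finset (Fin n)).offDiag,
      ∑ r ∈ (univ : Finset (Fin n)).offDiag, ∑ x, ∑ y,
      xif ε p (B q.1) x * xif ε p (B q.2) x
        * (xif ε p (B r.1) y * xif ε p (B r.2) y)) hpt]
  rw [Exp_sum ε p ((univ : Finset (Fin n)).offDiag) (fun q B =>
      ∑ r ∈ (univ : Finset (Fin n)).offDiag, ∑ x, ∑ y,
      xif ε p (B q.1) x * xif ε p (B q.2) x
        * (xif ε p (B r.1) y * xif ε p (B r.2) y))]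
  rw [Finset.sum_congr rfl fun q _ => Exp_sum ε p ((univ : Finset (Fin n)).offDiag)
    (fun r B => ∑ x, ∑ y, xif ε p (B q.1) x * xif ε p (B q.2) x
      * (xif ε p (B r.1) y * xif ε p (B r.2) y))]
  rw [Finset.sum_congr rfl fun q _ => Finset.sum_congr rfl fun r _ =>
    Exp_sum ε p univ (fun x B => ∑ y, xif ε p (B q.1) x * xif ε p (B q.2) x
      * (xif ε p (B r.1) y * xif ε p (B r.2) y))]
  rw [Finset.sum_congr rfl fun q _ => Finset.sum_congr rfl fun r _ =>
    Finset.sum_congr rfl fun x _ => Exp_sum ε p univ (fun y B =>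
      xif ε p (B q.1) x * xif ε p (B q.2) x
        * (xif ε p (B r.1) y * xif ε p (B r.2) y))]
  have hq4 : ∀ q ∈ (univ : Finset (Fin n)).offDiag,
      ∀ r ∈ (univ : Finset (Fin n)).offDiag, ∀ (x y : Fin k),
      Exp ε p (fun B => xif ε p (B q.1) x * xif ε p (B q.2) x
        * (xif ε p (B r.1) y * xif ε p (B r.2) y))
      = if (r.1 = q.1 ∧ r.2 = q.2) ∨ (r.1 = q.2 ∧ r.2 = q.1)
          then Cf ε p x y * Cf ε p x y else 0 :=
    fun q hq r hr x y => Exp_xi4 hp1 (Finset.mem_offDiag.mp hq).2.2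
      (Finset.mem_offDiag.mp hr).2.2 x y
  rw [Finset.sum_congr rfl fun q hq => Finset.sum_congr rfl fun r hr =>
    Finset.sum_congr rfl fun x _ => Finset.sum_congr rfl fun y _ => hq4 q hq r hr x y]
  have hcol : ∀ q r : Fin n × Fin n,
      (∑ x, ∑ y, if (r.1 = q.1 ∧ r.2 = q.2) ∨ (r.1 = q.2 ∧ r.2 = q.1)
        then Cf ε p x y * Cf ε p x y else 0)
      = if (r.1 = q.1 ∧ r.2 = q.2) ∨ (r.1 = q.2 ∧ r.2 = q.1) then CF2 ε p else 0 := by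
    intro q r
    by_cases h : (r.1 = q.1 ∧ r.2 = q.2) ∨ (r.1 = q.2 ∧ r.2 = q.1) <;> simp [h, CF2]
  rw [Finset.sum_congr rfl fun q _ => Finset.sum_congr rfl fun r _ => hcol q r]
  have hsum2 : ∀ q ∈ (univ : Finset (Fin n)).offDiag,
      (∑ r ∈ (univ : Finset (Fin n)).offDiag,
        if (r.1 = q.1 ∧ r.2 = q.2) ∨ (r.1 = q.2 ∧ r.2 = q.1) then CF2 ε p else 0)
      = 2 * CF2 ε p := by
    intro q hq
    have hqne : q.1 ≠ q.2 := (Finset.mem_offDiag.mp hq).2.2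
    have hswap : q.swap ∈ (univ : Finset (Fin n)).offDiag := by
      simp only [Finset.mem_offDiag] at hq ⊢
      exact ⟨Finset.mem_univ _, Finset.mem_univ _, fun h => hq.2.2 (by
        simpa [Prod.swap] using h.symm)⟩
    have hne : q ≠ q.swap := by
      intro h
      exact hqne (by
        have := congrArg Prod.fst h
        simpa [Prod.swap] using this)
    have hpt2 : ∀ r : Fin n × Fin n,
        (if (r.1 = q.1 ∧ r.2 = q.2) ∨ (r.1 = q.2 ∧ r.2 = q.1) then CF2 ε p else 0)
        = (if r = q then CF2 ε p else 0) + (if r = q.swap then CF2 ε p else 0) := by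
      intro r
      have e1 : (r.1 = q.1 ∧ r.2 = q.2) ↔ r = q := (Prod.ext_iff).symm
      have e2 : (r.1 = q.2 ∧ r.2 = q.1) ↔ r = q.swap := by
        rw [Prod.ext_iff]; simp [Prod.swap]
      by_cases h1 : r = q
      · subst h1
        simp [e1, e2, hne, hqne]
      · by_cases h2 : r = q.swap
        · subst h2
          simp [e1, e2, Ne.symm hne]
        · simp [e1, e2, h1, h2]
    rw [Finset.sum_congr rfl fun r _ => hpt2 r, Finset.sum_add_distrib,
      Finset.sum_ite_eq' ((univ : Finset (Fin n)).offDiag) q (fun _ => CF2 ε p),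
      Finset.sum_ite_eq' ((univ : Finset (Fin n)).offDiag) q.swap (fun _ => CF2 ε p),
      if_pos hq, if_pos hswap]
    ring
  rw [Finset.sum_congr rfl hsum2, Finset.sum_const, nsmul_eq_mul, card_offDiag_real]

lemma Exp_T (hp1 : ∑ x, p x = 1) :
    Exp ε p (fun B : Fin n → Fin k → Bool => Tstat ε B)
      = ((n : ℝ) ^ 2 - n) * sP ε p := by
  rw [Exp_congr ε p (G := fun B => ((n : ℝ) ^ 2 - n) * sP ε p
      + (Lf ε p n B + Qf ε p n B)) (fun B => by rw [T_decomp ε p B]; ring)]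
  rw [Exp_add ε p (fun _ => ((n : ℝ) ^ 2 - n) * sP ε p)
    (fun B => Lf ε p n B + Qf ε p n B)]
  rw [Exp_add ε p (fun B => Lf ε p n B) (fun B => Qf ε p n B)]
  rw [Exp_const hp1, Exp_L0 hp1, Exp_Q0 hp1]
  ring

lemma Exp_T2 (hp1 : ∑ x, p x = 1) :
    Exp ε p (fun B : Fin n → Fin k → Bool => Tstat ε B ^ 2)
      = (((n : ℝ) ^ 2 - n) * sP ε p) ^ 2
        + 4 * ((n : ℝ) - 1) ^ 2 * ((n : ℝ) * DCD ε p)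
        + ((n : ℝ) ^ 2 - n) * (2 * CF2 ε p) := by
  set c0 : ℝ := ((n : ℝ) ^ 2 - n) * sP ε p with hc0
  rw [Exp_congr ε p (G := fun B => c0 ^ 2 + ((2 * c0) * Lf ε p n B
      + ((2 * c0) * Qf ε p n B + (Lf ε p n B * Lf ε p n B
      + (2 * (Lf ε p n B * Qf ε p n B) + Qf ε p n B * Qf ε p n B)))))
    (fun B => by rw [T_decomp ε p B, ← hc0]; ring)]
  rw [Exp_add ε p (fun _ => c0 ^ 2) (fun B => (2 * c0) * Lf ε p n B
      + ((2 * c0) * Qf ε p n B + (Lf ε p n B * Lf ε p n B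
      + (2 * (Lf ε p n B * Qf ε p n B) + Qf ε p n B * Qf ε p n B))))]
  rw [Exp_add ε p (fun B => (2 * c0) * Lf ε p n B)
    (fun B => (2 * c0) * Qf ε p n B + (Lf ε p n B * Lf ε p n B
      + (2 * (Lf ε p n B * Qf ε p n B) + Qf ε p n B * Qf ε p n B)))]
  rw [Exp_add ε p (fun B => (2 * c0) * Qf ε p n B)
    (fun B => Lf ε p n B * Lf ε p n B
      + (2 * (Lf ε p n B * Qf ε p n B) + Qf ε p n B * Qf ε p n B))]
  rw [Exp_add ε p (fun B => Lf ε p n B * Lf ε p n B)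
    (fun B => 2 * (Lf ε p n B * Qf ε p n B) + Qf ε p n B * Qf ε p n B)]
  rw [Exp_add ε p (fun B => 2 * (Lf ε p n B * Qf ε p n B))
    (fun B => Qf ε p n B * Qf ε p n B)]
  rw [Exp_const hp1, Exp_cmul ε p (2 * c0) (Lf ε p n),
    Exp_cmul ε p (2 * c0) (Qf ε p n),
    Exp_cmul ε p 2 (fun B => Lf ε p n B * Qf ε p n B),
    Exp_L0 hp1, Exp_Q0 hp1, Exp_LL hp1, Exp_LQ0 hp1, Exp_QQ hp1]
  ring

/-! ### analytic bounds -/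

lemma exp_ge_one (hε0 : 0 < ε) : 1 ≤ Real.exp (ε / 2) := by
  rw [show (1 : ℝ) = Real.exp 0 from (Real.exp_zero).symm]
  exact Real.exp_le_exp.mpr (by linarith)

lemma alpha_nonneg (hε0 : 0 < ε) : 0 ≤ alphaR ε := by
  have h := exp_ge_one (ε := ε) hε0
  unfold alphaR
  exact div_nonneg (by linarith) (by positivity)

lemma alpha_le_one : alphaR ε ≤ 1 := by
  unfold alphaR
  rw [div_le_one (by positivity)]
  linarith

lemma beta_nonneg : 0 ≤ betaR ε := by unfold betaR; positivity

lemma p_le_one (hp0 : ∀ x, 0 ≤ p x) (hp1 : ∑ x, p x = 1) (x : Fin k) : p x ≤ 1 := by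
  rw [← hp1]
  exact Finset.single_le_sum (fun i _ => hp0 i) (Finset.mem_univ x)

lemma q_bounds (hε0 : 0 < ε) (hp0 : ∀ x, 0 ≤ p x) (hp1 : ∑ x, p x = 1) (x : Fin k) :
    0 ≤ qf ε p x ∧ qf ε p x ≤ 1 := by
  have hα0 := alpha_nonneg (ε := ε) hε0
  have hα1 := alpha_le_one (ε := ε)
  have hβ0 := beta_nonneg (ε := ε)
  have hp := hp0 x
  have hp' := p_le_one hp0 hp1 x
  have hαβ : alphaR ε + betaR ε ≤ 1 := by
    unfold alphaR betaR
    rw [← add_div, div_le_one (by positivity)]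
    linarith
  constructor
  · unfold qf; positivity
  · unfold qf
    nlinarith

lemma DCD_le (hε0 : 0 < ε) (hp0 : ∀ x, 0 ≤ p x) (hp1 : ∑ x, p x = 1) :
    DCD ε p ≤ 2 * sP ε p := by
  have hα0 := alpha_nonneg (ε := ε) hε0
  have hα1 := alpha_le_one (ε := ε)
  have key : DCD ε p
      = (∑ x, deltaf ε p x ^ 2 * (qf ε p x * (1 - qf ε p x) + alphaR ε ^ 2 * p x ^ 2))
        - alphaR ε ^ 2 * (∑ x, deltaf ε p x * p x) * (∑ x, deltaf ε p x * p x) := by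
    unfold DCD
    have e2 : ∀ x y : Fin k, deltaf ε p x * deltaf ε p y * Cf ε p x y
        = (if x = y then deltaf ε p y ^ 2 * (qf ε p y * (1 - qf ε p y)
            + alphaR ε ^ 2 * p y ^ 2) else 0)
          - (alphaR ε ^ 2 * (deltaf ε p x * p x)) * (deltaf ε p y * p y) := by
      intro x y
      unfold Cf
      split_ifs with h
      · subst h; ring
      · ring
    have e1 : ∀ x : Fin k, (∑ y, deltaf ε p x * deltaf ε p y * Cf ε p x y)
        = deltaf ε p x ^ 2 * (qf ε p x * (1 - qf ε p x) + alphaR ε ^ 2 * p x ^ 2)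
          - (alphaR ε ^ 2 * (deltaf ε p x * p x)) * (∑ y, deltaf ε p y * p y) := by
      intro x
      rw [Finset.sum_congr rfl fun y _ => e2 x y, Finset.sum_sub_distrib,
        Finset.sum_ite_eq univ x (fun y => deltaf ε p y ^ 2
          * (qf ε p y * (1 - qf ε p y) + alphaR ε ^ 2 * p y ^ 2)),
        if_pos (Finset.mem_univ x), ← Finset.mul_sum]
    rw [Finset.sum_congr rfl fun x _ => e1 x, Finset.sum_sub_distrib, ← Finset.sum_mul,
      ← Finset.mul_sum]
  have hbd : ∀ x : Fin k,
      deltaf ε p x ^ 2 * (qf ε p x * (1 - qf ε p x) + alphaR ε ^ 2 * p x ^ 2)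
        ≤ 2 * deltaf ε p x ^ 2 := by
    intro x
    have hq := q_bounds hε0 hp0 hp1 x
    have hp := hp0 x
    have hp' := p_le_one hp0 hp1 x
    have hα0 := alpha_nonneg (ε := ε) hε0
    have hα1 := alpha_le_one (ε := ε)
    have hA : qf ε p x * (1 - qf ε p x) + alphaR ε ^ 2 * p x ^ 2 ≤ 2 := by
      have h1 : alphaR ε ^ 2 ≤ 1 := by nlinarith
      have h2 : p x ^ 2 ≤ 1 := by nlinarith
      have h3 : alphaR ε ^ 2 * p x ^ 2 ≤ 1 := mul_le_one₀ h1 (sq_nonneg _) h2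
      nlinarith [sq_nonneg (qf ε p x - 1/2)]
    have hA0 : 0 ≤ qf ε p x * (1 - qf ε p x) + alphaR ε ^ 2 * p x ^ 2 := by
      have := mul_nonneg hq.1 (by linarith [hq.2] : 0 ≤ 1 - qf ε p x)
      positivity
    calc deltaf ε p x ^ 2 * (qf ε p x * (1 - qf ε p x) + alphaR ε ^ 2 * p x ^ 2)
        ≤ deltaf ε p x ^ 2 * 2 := mul_le_mul_of_nonneg_left hA (sq_nonneg _)
      _ = 2 * deltaf ε p x ^ 2 := by ring
  have h2 : (∑ x, deltaf ε p x ^ 2 * (qf ε p x * (1 - qf ε p x)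
      + alphaR ε ^ 2 * p x ^ 2)) ≤ ∑ x, 2 * deltaf ε p x ^ 2 :=
    Finset.sum_le_sum fun x _ => hbd x
  have h3 : (0:ℝ) ≤ alphaR ε ^ 2 * (∑ x, deltaf ε p x * p x) * (∑ x, deltaf ε p x * p x) := by
    rw [mul_assoc]
    exact mul_nonneg (sq_nonneg _) (mul_self_nonneg _)
  have h4 : (∑ x, 2 * deltaf ε p x ^ 2) = 2 * sP ε p := by
    rw [sP, Finset.mul_sum]
  linarith [key, h2, h3, h4]

lemma sP_nonneg : 0 ≤ sP ε p := Finset.sum_nonneg fun x _ => sq_nonneg _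

lemma CF2_nonneg : 0 ≤ CF2 ε p :=
  Finset.sum_nonneg fun x _ => Finset.sum_nonneg fun y _ => mul_self_nonneg _

lemma CF2_le (hε0 : 0 < ε) (hp0 : ∀ x, 0 ≤ p x) (hp1 : ∑ x, p x = 1) :
    CF2 ε p ≤ 2 * (k : ℝ) := by
  rcases Nat.eq_zero_or_pos k with rfl | hk
  · simp [CF2]
  have hk1 : (1 : ℝ) ≤ (k : ℝ) := by exact_mod_cast hk
  have hα0 := alpha_nonneg (ε := ε) hε0
  have hα1 := alpha_le_one (ε := ε)
  have hpw : ∀ x y : Fin k, Cf ε p x y * Cf ε p x y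
      ≤ (if x = y then (1:ℝ)/16 else 0)
        + (alphaR ε ^ 2) ^ 2 * (p x ^ 2 * p y ^ 2) := by
    intro x y
    have hqx := q_bounds hε0 hp0 hp1 x
    unfold Cf
    split_ifs with h
    · have h1 : 0 ≤ qf ε p x * (1 - qf ε p x) := mul_nonneg hqx.1 (by linarith [hqx.2])
      have h2 : qf ε p x * (1 - qf ε p x) ≤ 1/4 := by nlinarith [sq_nonneg (qf ε p x - 1/2)]
      have h3 : 0 ≤ (alphaR ε ^ 2) ^ 2 * (p x ^ 2 * p y ^ 2) := by positivity
      nlinarith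
    · nlinarith [sq_nonneg (alphaR ε ^ 2 * p x * p y)]
  have h1 : CF2 ε p ≤ ∑ x, ∑ y, ((if x = y then (1:ℝ)/16 else 0)
      + (alphaR ε ^ 2) ^ 2 * (p x ^ 2 * p y ^ 2)) := by
    unfold CF2
    exact Finset.sum_le_sum fun x _ => Finset.sum_le_sum fun y _ => hpw x y
  have h2 : (∑ x : Fin k, ∑ y : Fin k, ((if x = y then (1:ℝ)/16 else 0)
      + (alphaR ε ^ 2) ^ 2 * (p x ^ 2 * p y ^ 2)))
      = (k : ℝ) * (1/16) + (alphaR ε ^ 2) ^ 2 * ((∑ x, p x ^ 2) * (∑ y, p y ^ 2)) := by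
    rw [Finset.sum_congr rfl fun x _ => Finset.sum_add_distrib]
    rw [Finset.sum_add_distrib]
    congr 1
    · rw [Finset.sum_congr rfl fun x _ =>
        Finset.sum_ite_eq univ x (fun _ => (1:ℝ)/16)]
      simp [Finset.card_univ, mul_comm]
    · rw [Finset.sum_mul_sum univ univ (fun x => p x ^ 2) (fun y => p y ^ 2),
        Finset.mul_sum]
      exact Finset.sum_congr rfl fun x _ => by rw [Finset.mul_sum]
  have hps : (∑ x, p x ^ 2) ≤ 1 := by
    rw [← hp1]
    exact Finset.sum_le_sum fun x _ => by
      nlinarith [hp0 x, p_le_one hp0 hp1 x]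
  have hps0 : (0:ℝ) ≤ ∑ x, p x ^ 2 := Finset.sum_nonneg fun x _ => sq_nonneg _
  have hα2 : alphaR ε ^ 2 ≤ 1 := by nlinarith [hα0, hα1]
  have hα20 : (0:ℝ) ≤ alphaR ε ^ 2 := sq_nonneg _
  have hα4 : (alphaR ε ^ 2) ^ 2 ≤ 1 := by nlinarith [hα2, hα20]
  nlinarith [h1, h2, hps, hps0, hα4, mul_nonneg hps0 hps0]

lemma sP_eq : sP ε p = alphaR ε ^ 2 * ∑ x, (p x - 1 / (k : ℝ)) ^ 2 := by
  unfold sP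
  rw [Finset.mul_sum]
  exact Finset.sum_congr rfl fun x _ => by
    unfold deltaf qf lam; ring

end RV

/-- Variance of the RAPPOR statistic:
`Var(T) ≤ 4kn² + 8n³α_R²‖p − u‖₂²`, which in turn is `4kn² + 8n·E[T]`. -/
theorem rappor_statistic_variance
    (k n : ℕ) (ε : ℝ) (hε0 : 0 < ε) (hε1 : ε ≤ 1)
    (p : Fin k → ℝ) (hp0 : ∀ x, 0 ≤ p x) (hp1 : ∑ x, p x = 1) :
    ((∑ B : Fin n → Fin k → Bool, rapporN ε p B * (Tstat ε B) ^ 2)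
          - (∑ B : Fin n → Fin k → Bool, rapporN ε p B * Tstat ε B) ^ 2
        ≤ 4 * (k : ℝ) * (n : ℝ) ^ 2
            + 8 * (n : ℝ) ^ 3 * (alphaR ε) ^ 2 * ∑ x, (p x - 1 / (k : ℝ)) ^ 2)
    ∧ ((∑ B : Fin n → Fin k → Bool, rapporN ε p B * (Tstat ε B) ^ 2)
          - (∑ B : Fin n → Fin k → Bool, rapporN ε p B * Tstat ε B) ^ 2
        ≤ 4 * (k : ℝ) * (n : ℝ) ^ 2
            + 8 * (n : ℝ) * ∑ B : Fin n → Fin k → Bool, rapporN ε p B * Tstat ε B) := by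
  have hT : (∑ B : Fin n → Fin k → Bool, rapporN ε p B * Tstat ε B)
      = ((n : ℝ) ^ 2 - n) * RV.sP ε p := RV.Exp_T hp1
  have hT2 : (∑ B : Fin n → Fin k → Bool, rapporN ε p B * (Tstat ε B) ^ 2)
      = (((n : ℝ) ^ 2 - n) * RV.sP ε p) ^ 2
        + 4 * ((n : ℝ) - 1) ^ 2 * ((n : ℝ) * RV.DCD ε p)
        + ((n : ℝ) ^ 2 - n) * (2 * RV.CF2 ε p) := RV.Exp_T2 hp1
  have hs : 0 ≤ RV.sP ε p := RV.sP_nonneg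
  have hD : RV.DCD ε p ≤ 2 * RV.sP ε p := RV.DCD_le hε0 hp0 hp1
  have hC2 : RV.CF2 ε p ≤ 2 * (k : ℝ) := RV.CF2_le hε0 hp0 hp1
  have hC0 : 0 ≤ RV.CF2 ε p := RV.CF2_nonneg
  have hn0 : (0:ℝ) ≤ (n : ℝ) := Nat.cast_nonneg n
  have hk0 : (0:ℝ) ≤ (k : ℝ) := Nat.cast_nonneg k
  have hn2 : (0:ℝ) ≤ (n : ℝ) ^ 2 - n := by
    rcases Nat.eq_zero_or_pos n with rfl | h
    · simp
    · have h1 : (1:ℝ) ≤ (n : ℝ) := by exact_mod_cast h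
      nlinarith
  have hVar : (∑ B : Fin n → Fin k → Bool, rapporN ε p B * (Tstat ε B) ^ 2)
      - (∑ B : Fin n → Fin k → Bool, rapporN ε p B * Tstat ε B) ^ 2
      = 4 * ((n : ℝ) - 1) ^ 2 * ((n : ℝ) * RV.DCD ε p)
        + ((n : ℝ) ^ 2 - n) * (2 * RV.CF2 ε p) := by
    rw [hT2, hT]; ring
  have hc : (0:ℝ) ≤ ((n : ℝ) - 1) ^ 2 * (n : ℝ) := mul_nonneg (sq_nonneg _) hn0
  have A1 : 4 * ((n : ℝ) - 1) ^ 2 * ((n : ℝ) * RV.DCD ε p)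
      ≤ 8 * ((n : ℝ) - 1) ^ 2 * (n : ℝ) * RV.sP ε p := by
    nlinarith [mul_le_mul_of_nonneg_left hD hc]
  have A2 : 8 * ((n : ℝ) - 1) ^ 2 * (n : ℝ) * RV.sP ε p
      ≤ 8 * (n : ℝ) * (((n : ℝ) ^ 2 - n) * RV.sP ε p) := by
    nlinarith [mul_nonneg hn2 hs]
  have A3 : ((n : ℝ) ^ 2 - n) * (2 * RV.CF2 ε p) ≤ 4 * (k : ℝ) * (n : ℝ) ^ 2 := by
    nlinarith [mul_le_mul_of_nonneg_left hC2 hn2, mul_nonneg hk0 hn0]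
  have main2 : (∑ B : Fin n → Fin k → Bool, rapporN ε p B * (Tstat ε B) ^ 2)
      - (∑ B : Fin n → Fin k → Bool, rapporN ε p B * Tstat ε B) ^ 2
      ≤ 4 * (k : ℝ) * (n : ℝ) ^ 2 + 8 * (n : ℝ) * (((n : ℝ) ^ 2 - n) * RV.sP ε p) := by
    rw [hVar]
    linarith [A1, A2, A3]
  constructor
  · have hr : 8 * (n : ℝ) ^ 3 * (alphaR ε) ^ 2 * ∑ x, (p x - 1 / (k : ℝ)) ^ 2
        = 8 * (n : ℝ) ^ 3 * RV.sP ε p := by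
      rw [RV.sP_eq (ε := ε) (p := p)]; ring
    have A4 : 8 * (n : ℝ) * (((n : ℝ) ^ 2 - n) * RV.sP ε p)
        ≤ 8 * (n : ℝ) ^ 3 * RV.sP ε p := by
      nlinarith [mul_nonneg (mul_nonneg hn0 hn0) hs]
    rw [hr]
    linarith [main2, A4]
  · have e : 8 * (n : ℝ) * (∑ B : Fin n → Fin k → Bool, rapporN ε p B * Tstat ε B)
        = 8 * (n : ℝ) * (((n : ℝ) ^ 2 - n) * RV.sP ε p) := by rw [hT]
    linarith [main2, e]
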